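/- arXiv:1103.1934 — 2 statements merged into one kernel-verified Lean document; each statement's English description precedes it below -/
import Mathlib

section
/- Every linear, 3-uniform, G(7,4)-sparse hypergraph is 2-cancellative. -/
/-- A 3-uniform hypergraph is `G(7,4)`-sparse: no four distinct edges span at most
7 vertices. -/
def Sparse74 (H : Finset (Finset ℕ)) : Prop :=
  ∀ A B C D : Finset ℕ, A ∈ H → B ∈ H → C ∈ H → D ∈ H →
    A ≠ B → A ≠ C → A ≠ D → B ≠ C → B ≠ D → C ≠ D →
    7 < (A ∪ B ∪ C ∪ D).card

/-- A hypergraph is linear: two distinct edges meet in at most one vertex. -/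
def LinearHypergraph (H : Finset (Finset ℕ)) : Prop :=
  ∀ E F : Finset ℕ, E ∈ H → F ∈ H → E ≠ F → (E ∩ F).card ≤ 1

/-- A family is 2-cancellative: for all four distinct members `A, B, C, D`,
`A ∪ B ∪ C = A ∪ B ∪ D` implies `C = D`. -/
def TwoCancellative (F : Finset (Finset ℕ)) : Prop :=
  ∀ A B C D : Finset ℕ, A ∈ F → B ∈ F → C ∈ F → D ∈ F →
    A ≠ B → A ≠ C → A ≠ D → B ≠ C → B ≠ D →
    A ∪ B ∪ C = A ∪ B ∪ D → C = D

/-- every linear, 3-uniform, `G(7,4)`-sparse hypergraph is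
2-cancellative. -/
theorem linear_sparse_imp_two_cancellative (H : Finset (Finset ℕ))
    (h3 : ∀ E ∈ H, E.card = 3) (hlin : LinearHypergraph H) (hsp : Sparse74 H) :
    TwoCancellative H := by
  intro A B C D hA hB hC hD hAB hAC hAD hBC hBD heq
  by_contra hCD
  have hsub : A ∪ B ∪ C ∪ D ⊆ (A ∪ B) ∪ (C ∩ D) := by
    intro x hx
    simp only [Finset.mem_union, Finset.mem_inter] at hx ⊢
    rcases hx with (((h | h) | h) | h)
    · tauto
    · tauto
    · have hx' : x ∈ A ∪ B ∪ D := by rw [← heq]; simp [Finset.mem_union, h]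
      simp only [Finset.mem_union] at hx'
      tauto
    · have hx' : x ∈ A ∪ B ∪ C := by rw [heq]; simp [Finset.mem_union, h]
      simp only [Finset.mem_union] at hx'
      tauto
  have h1 : (A ∪ B ∪ C ∪ D).card ≤ (A ∪ B).card + (C ∩ D).card :=
    le_trans (Finset.card_le_card hsub) (Finset.card_union_le _ _)
  have h2 : (A ∪ B).card ≤ 6 :=
    le_trans (Finset.card_union_le _ _) (by rw [h3 A hA, h3 B hB])
  have h4 := hlin C D hC hD hCD
  have h5 := hsp A B C D hA hB hC hD hAB hAC hAD hBC hBD hCD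
  omega
end

section
/- Every 3-partite, 2-cancellative, linear 3-uniform hypergraph is G(7,4)-sparse: no four distinct edges span at most 7 vertices. -/
lemma two_le_inter_card {E F : Finset ℕ} {x y : ℕ}
    (hxE : x ∈ E) (hxF : x ∈ F) (hyE : y ∈ E) (hyF : y ∈ F) (hxy : x ≠ y) :
    1 < (E ∩ F).card :=
  Finset.one_lt_card.mpr ⟨x, Finset.mem_inter.mpr ⟨hxE, hxF⟩, y,
    Finset.mem_inter.mpr ⟨hyE, hyF⟩, hxy⟩

lemma aux_disj2 {E F G : Finset ℕ} (hE : E.card = 3) (hF : F.card = 3) (hG : G.card = 3)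
    (hFG : (F ∩ G).card ≤ 1) (h1 : E ∩ F = ∅) (h2 : E ∩ G = ∅) :
    8 ≤ (E ∪ F ∪ G).card := by
  have hFGc := Finset.card_union_add_card_inter F G
  have hEd : E ∩ (F ∪ G) = ∅ := by
    rw [Finset.inter_union_distrib_left, h1, h2, Finset.union_empty]
  have h := Finset.card_union_add_card_inter E (F ∪ G)
  rw [hEd] at h
  rw [Finset.union_assoc]
  simp at h
  omega

lemma aux_match {E F G K : Finset ℕ} (hE : E.card = 3) (hF : F.card = 3)
    (hG : G.card = 3) (hK : K.card = 3)
    (hEG : (E ∩ G).card ≤ 1) (hEK : (E ∩ K).card ≤ 1)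
    (hFG : (F ∩ G).card ≤ 1) (hFK : (F ∩ K).card ≤ 1)
    (h1 : E ∩ F = ∅) (h2 : G ∩ K = ∅) :
    8 ≤ ((E ∪ F) ∪ (G ∪ K)).card := by
  have c1 := Finset.card_union_add_card_inter E F
  have c2 := Finset.card_union_add_card_inter G K
  rw [h1] at c1; rw [h2] at c2
  simp at c1 c2
  have hsub : (E ∪ F) ∩ (G ∪ K) ⊆ ((E ∩ G) ∪ (E ∩ K)) ∪ ((F ∩ G) ∪ (F ∩ K)) := by
    intro x hx
    simp only [Finset.mem_union, Finset.mem_inter] at hx ⊢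
    tauto
  have hc : ((E ∪ F) ∩ (G ∪ K)).card ≤ 4 := by
    calc ((E ∪ F) ∩ (G ∪ K)).card ≤ (((E ∩ G) ∪ (E ∩ K)) ∪ ((F ∩ G) ∪ (F ∩ K))).card :=
          Finset.card_le_card hsub
      _ ≤ ((E ∩ G) ∪ (E ∩ K)).card + ((F ∩ G) ∪ (F ∩ K)).card := Finset.card_union_le _ _
      _ ≤ ((E ∩ G).card + (E ∩ K).card) + ((F ∩ G).card + (F ∩ K).card) := by
          gcongr <;> exact Finset.card_union_le _ _
      _ ≤ 4 := by omega
  have h := Finset.card_union_add_card_inter (E ∪ F) (G ∪ K)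
  omega

lemma aux_triple {V1 V2 V3 : Finset ℕ} (d12 : Disjoint V1 V2) (d13 : Disjoint V1 V3)
    (d23 : Disjoint V2 V3)
    {E F G K : Finset ℕ}
    (pE2 : (E ∩ V2).card = 1) (pE3 : (E ∩ V3).card = 1)
    (pF2 : (F ∩ V2).card = 1) (pF3 : (F ∩ V3).card = 1)
    (pG2 : (G ∩ V2).card = 1) (pG3 : (G ∩ V3).card = 1)
    (pK1 : (K ∩ V1).card = 1) (pK2 : (K ∩ V2).card = 1)
    (hEF : (E ∩ F).card ≤ 1) (hEG : (E ∩ G).card ≤ 1) (hFG : (F ∩ G).card ≤ 1)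
    (hKE : (K ∩ E).card ≤ 1) (hKF : (K ∩ F).card ≤ 1) (hKG : (K ∩ G).card ≤ 1)
    {v : ℕ} (hv1 : v ∈ V1) (hvE : v ∈ E) (hvF : v ∈ F) (hvG : v ∈ G)
    (h7 : (E ∪ F ∪ G ∪ K).card ≤ 7) : False := by
  obtain ⟨e2, he2⟩ := Finset.card_eq_one.mp pE2
  obtain ⟨e3, he3⟩ := Finset.card_eq_one.mp pE3
  obtain ⟨f2, hf2⟩ := Finset.card_eq_one.mp pF2
  obtain ⟨f3, hf3⟩ := Finset.card_eq_one.mp pF3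
  obtain ⟨g2, hg2⟩ := Finset.card_eq_one.mp pG2
  obtain ⟨g3, hg3⟩ := Finset.card_eq_one.mp pG3
  obtain ⟨k1, hk1⟩ := Finset.card_eq_one.mp pK1
  obtain ⟨k2, hk2⟩ := Finset.card_eq_one.mp pK2
  have me2 : e2 ∈ E ∩ V2 := by rw [he2]; exact Finset.mem_singleton_self _
  have me3 : e3 ∈ E ∩ V3 := by rw [he3]; exact Finset.mem_singleton_self _
  have mf2 : f2 ∈ F ∩ V2 := by rw [hf2]; exact Finset.mem_singleton_self _
  have mf3 : f3 ∈ F ∩ V3 := by rw [hf3]; exact Finset.mem_singleton_self _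
  have mg2 : g2 ∈ G ∩ V2 := by rw [hg2]; exact Finset.mem_singleton_self _
  have mg3 : g3 ∈ G ∩ V3 := by rw [hg3]; exact Finset.mem_singleton_self _
  have mk1 : k1 ∈ K ∩ V1 := by rw [hk1]; exact Finset.mem_singleton_self _
  have mk2 : k2 ∈ K ∩ V2 := by rw [hk2]; exact Finset.mem_singleton_self _
  simp only [Finset.mem_inter] at me2 me3 mf2 mf3 mg2 mg3 mk1 mk2
  have hv2 : ∀ x ∈ V2, v ≠ x := fun x hx h => Finset.disjoint_left.mp d12 hv1 (h ▸ hx)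
  have hv3 : ∀ x ∈ V3, v ≠ x := fun x hx h => Finset.disjoint_left.mp d13 hv1 (h ▸ hx)
  have def2 : e2 ≠ f2 := by
    intro h
    exact absurd hEF (by
      have := two_le_inter_card me2.1 (h ▸ mf2.1) hvE hvF (hv2 _ me2.2).symm
      omega)
  have deg2 : e2 ≠ g2 := by
    intro h
    exact absurd hEG (by
      have := two_le_inter_card me2.1 (h ▸ mg2.1) hvE hvG (hv2 _ me2.2).symm
      omega)
  have dfg2 : f2 ≠ g2 := by
    intro h
    exact absurd hFG (by
      have := two_le_inter_card mf2.1 (h ▸ mg2.1) hvF hvG (hv2 _ mf2.2).symm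
      omega)
  have def3 : e3 ≠ f3 := by
    intro h
    exact absurd hEF (by
      have := two_le_inter_card me3.1 (h ▸ mf3.1) hvE hvF (hv3 _ me3.2).symm
      omega)
  have deg3 : e3 ≠ g3 := by
    intro h
    exact absurd hEG (by
      have := two_le_inter_card me3.1 (h ▸ mg3.1) hvE hvG (hv3 _ me3.2).symm
      omega)
  have dfg3 : f3 ≠ g3 := by
    intro h
    exact absurd hFG (by
      have := two_le_inter_card mf3.1 (h ▸ mg3.1) hvF hvG (hv3 _ mf3.2).symm
      omega)
  set U : Finset ℕ := E ∪ F ∪ G ∪ K with hU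
  have hEU : E ⊆ U := by intro x hx; simp [hU, Finset.mem_union]; tauto
  have hFU : F ⊆ U := by intro x hx; simp [hU, Finset.mem_union]; tauto
  have hGU : G ⊆ U := by intro x hx; simp [hU, Finset.mem_union]; tauto
  have hKU : K ⊆ U := by intro x hx; simp [hU, Finset.mem_union]; tauto
  have hsub2 : ({e2, f2, g2} : Finset ℕ) ⊆ U ∩ V2 := by
    intro x hx
    simp only [Finset.mem_insert, Finset.mem_singleton] at hx
    rcases hx with rfl | rfl | rfl
    · exact Finset.mem_inter.mpr ⟨hEU me2.1, me2.2⟩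
    · exact Finset.mem_inter.mpr ⟨hFU mf2.1, mf2.2⟩
    · exact Finset.mem_inter.mpr ⟨hGU mg2.1, mg2.2⟩
  have hsub3 : ({e3, f3, g3} : Finset ℕ) ⊆ U ∩ V3 := by
    intro x hx
    simp only [Finset.mem_insert, Finset.mem_singleton] at hx
    rcases hx with rfl | rfl | rfl
    · exact Finset.mem_inter.mpr ⟨hEU me3.1, me3.2⟩
    · exact Finset.mem_inter.mpr ⟨hFU mf3.1, mf3.2⟩
    · exact Finset.mem_inter.mpr ⟨hGU mg3.1, mg3.2⟩
  have card2 : 3 ≤ (U ∩ V2).card := by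
    have h1 : ({e2, f2, g2} : Finset ℕ).card = 3 :=
      Finset.card_eq_three.mpr ⟨e2, f2, g2, def2, deg2, dfg2, rfl⟩
    have := Finset.card_le_card hsub2
    omega
  have card3 : 3 ≤ (U ∩ V3).card := by
    have h1 : ({e3, f3, g3} : Finset ℕ).card = 3 :=
      Finset.card_eq_three.mpr ⟨e3, f3, g3, def3, deg3, dfg3, rfl⟩
    have := Finset.card_le_card hsub3
    omega
  have hd12' : Disjoint (U ∩ V1) (U ∩ V2) :=
    d12.mono Finset.inter_subset_right Finset.inter_subset_right
  have hd13' : Disjoint (U ∩ V1) (U ∩ V3) :=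
    d13.mono Finset.inter_subset_right Finset.inter_subset_right
  have hd23' : Disjoint (U ∩ V2) (U ∩ V3) :=
    d23.mono Finset.inter_subset_right Finset.inter_subset_right
  have hsum : (U ∩ V1).card + (U ∩ V2).card + (U ∩ V3).card ≤ U.card := by
    have h1 : Disjoint ((U ∩ V1) ∪ (U ∩ V2)) (U ∩ V3) :=
      Finset.disjoint_union_left.mpr ⟨hd13', hd23'⟩
    have e1 : (((U ∩ V1) ∪ (U ∩ V2)) ∪ (U ∩ V3)).card
        = (U ∩ V1).card + (U ∩ V2).card + (U ∩ V3).card := by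
      rw [Finset.card_union_of_disjoint h1, Finset.card_union_of_disjoint hd12']
    have hsb : ((U ∩ V1) ∪ (U ∩ V2)) ∪ (U ∩ V3) ⊆ U := by
      intro x hx
      simp only [Finset.mem_union, Finset.mem_inter] at hx
      tauto
    have := Finset.card_le_card hsb
    omega
  have hvU : v ∈ U ∩ V1 := Finset.mem_inter.mpr ⟨hEU hvE, hv1⟩
  have hk1U : k1 ∈ U ∩ V1 := Finset.mem_inter.mpr ⟨hKU mk1.1, mk1.2⟩
  have hc1 : 1 ≤ (U ∩ V1).card := Finset.card_pos.mpr ⟨v, hvU⟩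
  have hc1' : (U ∩ V1).card ≤ 1 := by omega
  have hvk : v = k1 := by
    by_contra hne
    have : 1 < (U ∩ V1).card := Finset.one_lt_card.mpr ⟨v, hvU, k1, hk1U, hne⟩
    omega
  have hvK : v ∈ K := hvk ▸ mk1.1
  have heq2 : ({e2, f2, g2} : Finset ℕ) = U ∩ V2 := by
    apply Finset.eq_of_subset_of_card_le hsub2
    have h1 : ({e2, f2, g2} : Finset ℕ).card = 3 :=
      Finset.card_eq_three.mpr ⟨e2, f2, g2, def2, deg2, dfg2, rfl⟩
    omega
  have hk2U : k2 ∈ ({e2, f2, g2} : Finset ℕ) := by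
    rw [heq2]; exact Finset.mem_inter.mpr ⟨hKU mk2.1, mk2.2⟩
  simp only [Finset.mem_insert, Finset.mem_singleton] at hk2U
  have hvk2 : v ≠ k2 := hv2 _ mk2.2
  rcases hk2U with rfl | rfl | rfl
  · exact absurd hKE (by have := two_le_inter_card hvK hvE mk2.1 me2.1 hvk2; omega)
  · exact absurd hKF (by have := two_le_inter_card hvK hvF mk2.1 mf2.1 hvk2; omega)
  · exact absurd hKG (by have := two_le_inter_card hvK hvG mk2.1 mg2.1 hvk2; omega)

set_option maxHeartbeats 1000000 in
/-- every 3-partite, 2-cancellative, linear 3-uniform hypergraph is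
`G(7,4)`-sparse. -/
theorem tripartite_cancellative_linear_imp_sparse (H : Finset (Finset ℕ))
    (h3 : ∀ E ∈ H, E.card = 3)
    (htri : ∃ V1 V2 V3 : Finset ℕ, Disjoint V1 V2 ∧ Disjoint V1 V3 ∧ Disjoint V2 V3 ∧
      ∀ E ∈ H, (E ∩ V1).card = 1 ∧ (E ∩ V2).card = 1 ∧ (E ∩ V3).card = 1)
    (hcanc : TwoCancellative H) (hlin : LinearHypergraph H) :
    Sparse74 H := by
  intro A B C D hA hB hC hD hAB hAC hAD hBC hBD hCD
  by_contra hlt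
  push_neg at hlt
  obtain ⟨V1, V2, V3, d12, d13, d23, hpart⟩ := htri
  have comm : ∀ S T : Finset ℕ, (S ∩ T).Nonempty → (T ∩ S).Nonempty := by
    intro S T h; rwa [Finset.inter_comm]
  have comme : ∀ S T : Finset ℕ, S ∩ T = ∅ → T ∩ S = ∅ := by
    intro S T h; rwa [Finset.inter_comm]
  -- every vertex of every edge lies in one of the parts
  have cover : ∀ E ∈ H, ∀ x ∈ E, x ∈ V1 ∨ x ∈ V2 ∨ x ∈ V3 := by
    intro E hE x hxE
    by_contra hcon
    push_neg at hcon
    obtain ⟨hn1, hn2, hn3⟩ := hcon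
    obtain ⟨p1, p2, p3⟩ := hpart E hE
    obtain ⟨e1, he1⟩ := Finset.card_eq_one.mp p1
    obtain ⟨e2, he2⟩ := Finset.card_eq_one.mp p2
    obtain ⟨e3, he3⟩ := Finset.card_eq_one.mp p3
    have me1 : e1 ∈ E ∩ V1 := by rw [he1]; exact Finset.mem_singleton_self _
    have me2 : e2 ∈ E ∩ V2 := by rw [he2]; exact Finset.mem_singleton_self _
    have me3 : e3 ∈ E ∩ V3 := by rw [he3]; exact Finset.mem_singleton_self _
    simp only [Finset.mem_inter] at me1 me2 me3
    have dx1 : x ≠ e1 := fun h => hn1 (h ▸ me1.2)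
    have dx2 : x ≠ e2 := fun h => hn2 (h ▸ me2.2)
    have dx3 : x ≠ e3 := fun h => hn3 (h ▸ me3.2)
    have d12' : e1 ≠ e2 := fun h => Finset.disjoint_left.mp d12 me1.2 (h ▸ me2.2)
    have d13' : e1 ≠ e3 := fun h => Finset.disjoint_left.mp d13 me1.2 (h ▸ me3.2)
    have d23' : e2 ≠ e3 := fun h => Finset.disjoint_left.mp d23 me2.2 (h ▸ me3.2)
    have hsub : ({x, e1, e2, e3} : Finset ℕ) ⊆ E := by
      intro y hy
      simp only [Finset.mem_insert, Finset.mem_singleton] at hy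
      rcases hy with rfl | rfl | rfl | rfl
      · exact hxE
      · exact me1.1
      · exact me2.1
      · exact me3.1
    have hc : ({x, e1, e2, e3} : Finset ℕ).card = 4 := by
      rw [Finset.card_insert_of_notMem (by simp [dx1, dx2, dx3]),
        Finset.card_insert_of_notMem (by simp [d12', d13']),
        Finset.card_insert_of_notMem (by simp [d23']), Finset.card_singleton]
    have := Finset.card_le_card hsub
    rw [h3 E hE] at this
    omega
  -- key: an edge meeting the other three is contained in their union
  have key : ∀ E F G K : Finset ℕ, E ∈ H → F ∈ H → G ∈ H → K ∈ H →
      E ≠ F → E ≠ G → E ≠ K → F ≠ G → F ≠ K → G ≠ K →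
      E ∪ F ∪ G ∪ K ⊆ A ∪ B ∪ C ∪ D →
      (E ∩ F).Nonempty → (E ∩ G).Nonempty → (E ∩ K).Nonempty →
      E ⊆ F ∪ G ∪ K := by
    intro E F G K hE hF hG hK dEF dEG dEK dFG dFK dGK hsub nEF nEG nEK
    have h7 : (E ∪ F ∪ G ∪ K).card ≤ 7 := le_trans (Finset.card_le_card hsub) hlt
    obtain ⟨u, hu⟩ := nEF
    obtain ⟨w, hw⟩ := nEG
    obtain ⟨x, hx⟩ := nEK
    simp only [Finset.mem_inter] at hu hw hx
    -- a common vertex of three of the edges is impossible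
    have trip : ∀ X Y Z W : Finset ℕ, X ∈ H → Y ∈ H → Z ∈ H → W ∈ H →
        X ≠ Y → X ≠ Z → Y ≠ Z → W ≠ X → W ≠ Y → W ≠ Z →
        (X ∪ Y ∪ Z ∪ W).card ≤ 7 →
        ∀ v : ℕ, v ∈ X → v ∈ Y → v ∈ Z → False := by
      intro X Y Z W hX hY hZ hW dXY dXZ dYZ dWX dWY dWZ h7' v hvX hvY hvZ
      have lXY := hlin X Y hX hY dXY
      have lXZ := hlin X Z hX hZ dXZ
      have lYZ := hlin Y Z hY hZ dYZ
      have lWX := hlin W X hW hX dWX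
      have lWY := hlin W Y hW hY dWY
      have lWZ := hlin W Z hW hZ dWZ
      rcases cover X hX v hvX with hv | hv | hv
      · exact aux_triple d12 d13 d23 (hpart X hX).2.1 (hpart X hX).2.2
          (hpart Y hY).2.1 (hpart Y hY).2.2 (hpart Z hZ).2.1 (hpart Z hZ).2.2
          (hpart W hW).1 (hpart W hW).2.1 lXY lXZ lYZ lWX lWY lWZ hv hvX hvY hvZ h7'
      · exact aux_triple d12.symm d23 d13 (hpart X hX).1 (hpart X hX).2.2
          (hpart Y hY).1 (hpart Y hY).2.2 (hpart Z hZ).1 (hpart Z hZ).2.2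
          (hpart W hW).2.1 (hpart W hW).1 lXY lXZ lYZ lWX lWY lWZ hv hvX hvY hvZ h7'
      · exact aux_triple d13.symm d23.symm d12 (hpart X hX).1 (hpart X hX).2.1
          (hpart Y hY).1 (hpart Y hY).2.1 (hpart Z hZ).1 (hpart Z hZ).2.1
          (hpart W hW).2.2 (hpart W hW).1 lXY lXZ lYZ lWX lWY lWZ hv hvX hvY hvZ h7'
    have huw : u ≠ w := by
      intro h
      subst h
      exact trip E F G K hE hF hG hK dEF dEG dFG dEK.symm dFK.symm dGK.symm h7
        u hu.1 hu.2 hw.2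
    have hux : u ≠ x := by
      intro h
      subst h
      have h7'' : (E ∪ F ∪ K ∪ G).card ≤ 7 := by
        have : E ∪ F ∪ K ∪ G = E ∪ F ∪ G ∪ K := by
          ext y; simp only [Finset.mem_union]; tauto
        rwa [this]
      exact trip E F K G hE hF hK hG dEF dEK dFK dEG.symm dFG.symm dGK h7''
        u hu.1 hu.2 hx.2
    have hwx : w ≠ x := by
      intro h
      subst h
      have h7'' : (E ∪ G ∪ K ∪ F).card ≤ 7 := by
        have : E ∪ G ∪ K ∪ F = E ∪ F ∪ G ∪ K := by
          ext y; simp only [Finset.mem_union]; tauto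
        rwa [this]
      exact trip E G K F hE hG hK hF dEG dEK dGK dEF.symm dFG dFK h7''
        w hw.1 hw.2 hx.2
    have hEeq : ({u, w, x} : Finset ℕ) = E := by
      apply Finset.eq_of_subset_of_card_le
      · intro y hy
        simp only [Finset.mem_insert, Finset.mem_singleton] at hy
        rcases hy with rfl | rfl | rfl
        · exact hu.1
        · exact hw.1
        · exact hx.1
      · rw [h3 E hE]
        rw [Finset.card_eq_three.mpr ⟨u, w, x, huw, hux, hwx, rfl⟩]
    rw [← hEeq]
    intro y hy
    simp only [Finset.mem_insert, Finset.mem_singleton] at hy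
    simp only [Finset.mem_union]
    rcases hy with rfl | rfl | rfl
    · exact Or.inl (Or.inl hu.2)
    · exact Or.inl (Or.inr hw.2)
    · exact Or.inr hx.2
  -- final: if the agreement graph misses at most the pair {Z, W}, contradiction
  have final : ∀ X Y Z W : Finset ℕ, X ∈ H → Y ∈ H → Z ∈ H → W ∈ H →
      X ≠ Y → X ≠ Z → X ≠ W → Y ≠ Z → Y ≠ W → Z ≠ W →
      X ∪ Y ∪ Z ∪ W ⊆ A ∪ B ∪ C ∪ D →
      (X ∩ Y).Nonempty → (X ∩ Z).Nonempty → (X ∩ W).Nonempty →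
      (Y ∩ Z).Nonempty → (Y ∩ W).Nonempty → False := by
    intro X Y Z W hX hY hZ hW dXY dXZ dXW dYZ dYW dZW hsub nXY nXZ nXW nYZ nYW
    have hXsub : X ⊆ Y ∪ Z ∪ W := key X Y Z W hX hY hZ hW dXY dXZ dXW dYZ dYW dZW
      hsub nXY nXZ nXW
    have hYsub : Y ⊆ X ∪ Z ∪ W := by
      apply key Y X Z W hY hX hZ hW dXY.symm dYZ dYW dXZ dXW dZW _ (comm _ _ nXY) nYZ nYW
      intro y hy
      apply hsub
      simp only [Finset.mem_union] at hy ⊢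
      tauto
    have hun : Z ∪ W ∪ X = Z ∪ W ∪ Y := by
      apply Finset.Subset.antisymm
      · apply Finset.union_subset
        · intro y hy
          simp only [Finset.mem_union] at hy ⊢
          tauto
        · intro y hy
          have := hXsub hy
          simp only [Finset.mem_union] at this ⊢
          tauto
      · apply Finset.union_subset
        · intro y hy
          simp only [Finset.mem_union] at hy ⊢
          tauto
        · intro y hy
          have := hYsub hy
          simp only [Finset.mem_union] at this ⊢
          tauto
    exact dXY (hcanc Z W X Y hZ hW hX hY dZW dXZ.symm dYZ.symm dXW.symm dYW.symm hun)
  -- now find the right ordering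
  have hsubAll : A ∪ B ∪ C ∪ D ⊆ A ∪ B ∪ C ∪ D := Finset.Subset.refl _
  have disj2' : ∀ E F G : Finset ℕ, E ∈ H → F ∈ H → G ∈ H → F ≠ G →
      E ∪ F ∪ G ⊆ A ∪ B ∪ C ∪ D → E ∩ F = ∅ → E ∩ G = ∅ → False := by
    intro E F G hE hF hG dFG hs h1 h2
    have h8 := aux_disj2 (h3 E hE) (h3 F hF) (h3 G hG) (hlin F G hF hG dFG) h1 h2
    have := Finset.card_le_card hs
    omega
  have disjM' : ∀ E F G K : Finset ℕ, E ∈ H → F ∈ H → G ∈ H → K ∈ H →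
      E ≠ G → E ≠ K → F ≠ G → F ≠ K →
      (E ∪ F) ∪ (G ∪ K) ⊆ A ∪ B ∪ C ∪ D → E ∩ F = ∅ → G ∩ K = ∅ → False := by
    intro E F G K hE hF hG hK dEG dEK dFG dFK hs h1 h2
    have h8 := aux_match (h3 E hE) (h3 F hF) (h3 G hG) (h3 K hK)
      (hlin E G hE hG dEG) (hlin E K hE hK dEK) (hlin F G hF hG dFG)
      (hlin F K hF hK dFK) h1 h2
    have := Finset.card_le_card hs
    omega
  by_cases nAB : (A ∩ B).Nonempty
  · by_cases nAC : (A ∩ C).Nonempty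
    · by_cases nAD : (A ∩ D).Nonempty
      · by_cases nBC : (B ∩ C).Nonempty
        · by_cases nBD : (B ∩ D).Nonempty
          · -- all five present
            exact final A B C D hA hB hC hD hAB hAC hAD hBC hBD hCD hsubAll
              nAB nAC nAD nBC nBD
          · -- B ∩ D = ∅
            have eBD : B ∩ D = ∅ := Finset.not_nonempty_iff_eq_empty.mp nBD
            have mCD : (C ∩ D).Nonempty := by
              by_contra h
              exact disj2' D B C hD hB hC hBC
                (by intro y hy; simp only [Finset.mem_union] at hy ⊢; tauto)
                (comme _ _ eBD) (comme _ _ (Finset.not_nonempty_iff_eq_empty.mp h))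
            exact final A C B D hA hC hB hD hAC hAB hAD hBC.symm hCD hBD
              (by intro y hy; simp only [Finset.mem_union] at hy ⊢; tauto)
              nAC nAB nAD (comm _ _ nBC) mCD
        · -- B ∩ C = ∅
          have eBC : B ∩ C = ∅ := Finset.not_nonempty_iff_eq_empty.mp nBC
          have mBD : (B ∩ D).Nonempty := by
            by_contra h
            exact disj2' B C D hB hC hD hCD
              (by intro y hy; simp only [Finset.mem_union] at hy ⊢; tauto)
              eBC (Finset.not_nonempty_iff_eq_empty.mp h)
          have mCD : (C ∩ D).Nonempty := by
            by_contra h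
            exact disj2' C B D hC hB hD hBD
              (by intro y hy; simp only [Finset.mem_union] at hy ⊢; tauto)
              (comme _ _ eBC) (Finset.not_nonempty_iff_eq_empty.mp h)
          exact final A D B C hA hD hB hC hAD hAB hAC hBD.symm hCD.symm hBC
            (by intro y hy; simp only [Finset.mem_union] at hy ⊢; tauto)
            nAD nAB nAC (comm _ _ mBD) (comm _ _ mCD)
      · -- A ∩ D = ∅
        have eAD : A ∩ D = ∅ := Finset.not_nonempty_iff_eq_empty.mp nAD
        have mBC : (B ∩ C).Nonempty := by
          by_contra h
          exact disjM' A D B C hA hD hB hC hAB hAC hBD.symm hCD.symm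
            (by intro y hy; simp only [Finset.mem_union] at hy ⊢; tauto)
            eAD (Finset.not_nonempty_iff_eq_empty.mp h)
        have mBD : (B ∩ D).Nonempty := by
          by_contra h
          exact disj2' D A B hD hA hB hAB
            (by intro y hy; simp only [Finset.mem_union] at hy ⊢; tauto)
            (comme _ _ eAD) (comme _ _ (Finset.not_nonempty_iff_eq_empty.mp h))
        have mCD : (C ∩ D).Nonempty := by
          by_contra h
          exact disj2' D A C hD hA hC hAC
            (by intro y hy; simp only [Finset.mem_union] at hy ⊢; tauto)
            (comme _ _ eAD) (comme _ _ (Finset.not_nonempty_iff_eq_empty.mp h))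
        exact final B C A D hB hC hA hD hBC hAB.symm hBD hAC.symm hCD hAD
          (by intro y hy; simp only [Finset.mem_union] at hy ⊢; tauto)
          mBC (comm _ _ nAB) mBD (comm _ _ nAC) mCD
    · -- A ∩ C = ∅
      have eAC : A ∩ C = ∅ := Finset.not_nonempty_iff_eq_empty.mp nAC
      have mAD : (A ∩ D).Nonempty := by
        by_contra h
        exact disj2' A C D hA hC hD hCD
          (by intro y hy; simp only [Finset.mem_union] at hy ⊢; tauto)
          eAC (Finset.not_nonempty_iff_eq_empty.mp h)
      have mBC : (B ∩ C).Nonempty := by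
        by_contra h
        exact disj2' C A B hC hA hB hAB
          (by intro y hy; simp only [Finset.mem_union] at hy ⊢; tauto)
          (comme _ _ eAC) (comme _ _ (Finset.not_nonempty_iff_eq_empty.mp h))
      have mBD : (B ∩ D).Nonempty := by
        by_contra h
        exact disjM' A C B D hA hC hB hD hAB hAD hBC.symm hCD
          (by intro y hy; simp only [Finset.mem_union] at hy ⊢; tauto)
          eAC (Finset.not_nonempty_iff_eq_empty.mp h)
      have mCD : (C ∩ D).Nonempty := by
        by_contra h
        exact disj2' C A D hC hA hD hAD
          (by intro y hy; simp only [Finset.mem_union] at hy ⊢; tauto)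
          (comme _ _ eAC) (Finset.not_nonempty_iff_eq_empty.mp h)
      exact final B D A C hB hD hA hC hBD hAB.symm hBC hAD.symm hCD.symm hAC
        (by intro y hy; simp only [Finset.mem_union] at hy ⊢; tauto)
        mBD (comm _ _ nAB) mBC (comm _ _ mAD) (comm _ _ mCD)
  · -- A ∩ B = ∅
    have eAB : A ∩ B = ∅ := Finset.not_nonempty_iff_eq_empty.mp nAB
    have mAC : (A ∩ C).Nonempty := by
      by_contra h
      exact disj2' A B C hA hB hC hBC
        (by intro y hy; simp only [Finset.mem_union] at hy ⊢; tauto)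
        eAB (Finset.not_nonempty_iff_eq_empty.mp h)
    have mAD : (A ∩ D).Nonempty := by
      by_contra h
      exact disj2' A B D hA hB hD hBD
        (by intro y hy; simp only [Finset.mem_union] at hy ⊢; tauto)
        eAB (Finset.not_nonempty_iff_eq_empty.mp h)
    have mBC : (B ∩ C).Nonempty := by
      by_contra h
      exact disj2' B A C hB hA hC hAC
        (by intro y hy; simp only [Finset.mem_union] at hy ⊢; tauto)
        (comme _ _ eAB) (Finset.not_nonempty_iff_eq_empty.mp h)
    have mBD : (B ∩ D).Nonempty := by
      by_contra h
      exact disj2' B A D hB hA hD hAD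
        (by intro y hy; simp only [Finset.mem_union] at hy ⊢; tauto)
        (comme _ _ eAB) (Finset.not_nonempty_iff_eq_empty.mp h)
    have mCD : (C ∩ D).Nonempty := by
      by_contra h
      exact disjM' A B C D hA hB hC hD hAC hAD hBC hBD
        (by intro y hy; simp only [Finset.mem_union] at hy ⊢; tauto)
        eAB (Finset.not_nonempty_iff_eq_empty.mp h)
    exact final C D A B hC hD hA hB hCD hAC.symm hBC.symm hAD.symm hBD.symm hAB
      (by intro y hy; simp only [Finset.mem_union] at hy ⊢; tauto)
      mCD (comm _ _ mAC) (comm _ _ mBC) (comm _ _ mAD) (comm _ _ mBD)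
end
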